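/- arXiv:1111.6759 — 5 statements merged into one kernel-verified Lean document; each statement's English description precedes it below -/
import Mathlib

section
/- Let Δ_⊛ : k⟨Y⟩ → k⟨Y⟩ ⊗ k⟨Y⟩ be the algebra morphism (for the concatenation product) determined on letters by Δ_⊛(y_n) = y_n ⊗ 1 + 1 ⊗ y_n + Σ_{p+q=n, p,q≥1} y_p ⊗ y_q. Then for all words u, v, w ∈ Y*, the coefficient ⟨u ⊛ v, w⟩ of w in the stuffle product u ⊛ v equals ⟨u ⊗ v, Δ_⊛(w)⟩, i.e. Δ_⊛ is the coproduct dual to the stuffle product. -/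
/-- The stuffle product of two words over the alphabet `Y = {y_i}_{i ≥ 1}` (letters
indexed by positive integers), with values in the free `K`-module `K⟨Y⟩` on words,
defined by `u ⊛ 1 = 1 ⊛ u = u` and
`y_i u ⊛ y_j v = y_i (u ⊛ y_j v) + y_j (y_i u ⊛ v) + y_{i+j} (u ⊛ v)`. -/
noncomputable def stuffleWord (K : Type*) [Field K] :
    List ℕ+ → List ℕ+ → (List ℕ+ →₀ K)
  | [], v => Finsupp.single v 1
  | u, [] => Finsupp.single u 1
  | i :: u, j :: v =>
      Finsupp.mapDomain (i :: ·) (stuffleWord K u (j :: v)) +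
      Finsupp.mapDomain (j :: ·) (stuffleWord K (i :: u) v) +
      Finsupp.mapDomain ((i + j) :: ·) (stuffleWord K u v)
  termination_by u v => u.length + v.length

/-- Bilinear extension of the stuffle product to `K⟨Y⟩`. -/
noncomputable def stuffleF (K : Type*) [Field K] (f g : List ℕ+ →₀ K) :
    List ℕ+ →₀ K :=
  f.sum fun u a => g.sum fun v b => (a * b) • stuffleWord K u v

/-- Multiplication on `K⟨Y⟩ ⊗ K⟨Y⟩` (basis: pairs of words), componentwise
concatenation, extended bilinearly. -/
noncomputable def mulPair (K : Type*) [Field K]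
    (f g : (List ℕ+ × List ℕ+) →₀ K) : (List ℕ+ × List ℕ+) →₀ K :=
  f.sum fun p a => g.sum fun q b =>
    (a * b) • Finsupp.single (p.1 ++ q.1, p.2 ++ q.2) 1

/-- `Δ_⊛ (y_n) = y_n ⊗ 1 + 1 ⊗ y_n + Σ_{p+q=n, p,q ≥ 1} y_p ⊗ y_q`. -/
noncomputable def deltaLetter (K : Type*) [Field K] (n : ℕ+) :
    (List ℕ+ × List ℕ+) →₀ K :=
  Finsupp.single ([n], []) 1 + Finsupp.single ([], [n]) 1 +
    ∑ p ∈ Finset.Iio n, Finsupp.single ([p], [n - p]) 1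

/-- `Δ_⊛` on words: the unique extension of `deltaLetter` as a morphism for the
concatenation product, `Δ_⊛(y_n w) = Δ_⊛(y_n) Δ_⊛(w)`. -/
noncomputable def deltaWord (K : Type*) [Field K] :
    List ℕ+ → ((List ℕ+ × List ℕ+) →₀ K)
  | [] => Finsupp.single ([], []) 1
  | n :: w => mulPair K (deltaLetter K n) (deltaWord K w)

section Aux

variable {K : Type*} [Field K]

lemma mulPair_zero_left (g : (List ℕ+ × List ℕ+) →₀ K) : mulPair K 0 g = 0 := by
  simp [mulPair]

lemma mulPair_add_left (f1 f2 g : (List ℕ+ × List ℕ+) →₀ K) :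
    mulPair K (f1 + f2) g = mulPair K f1 g + mulPair K f2 g := by
  unfold mulPair
  rw [Finsupp.sum_add_index] <;> simp [add_mul, add_smul, Finsupp.sum_add]

lemma mulPair_sum_left {ι : Type*} (s : Finset ι) (F : ι → ((List ℕ+ × List ℕ+) →₀ K))
    (g : (List ℕ+ × List ℕ+) →₀ K) :
    mulPair K (∑ p ∈ s, F p) g = ∑ p ∈ s, mulPair K (F p) g := by
  classical
  induction s using Finset.induction_on with
  | empty => simp [mulPair_zero_left]
  | insert _ _ ha ih => rw [Finset.sum_insert ha, Finset.sum_insert ha, mulPair_add_left, ih]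

lemma mulPair_single_left (p : List ℕ+ × List ℕ+) (g : (List ℕ+ × List ℕ+) →₀ K) :
    mulPair K (Finsupp.single p 1) g =
      Finsupp.mapDomain (fun q => (p.1 ++ q.1, p.2 ++ q.2)) g := by
  unfold mulPair Finsupp.mapDomain
  rw [Finsupp.sum_single_index]
  · simp [Finsupp.smul_single']
  · simp

lemma prepend_inj (p : List ℕ+ × List ℕ+) :
    Function.Injective fun q : List ℕ+ × List ℕ+ => (p.1 ++ q.1, p.2 ++ q.2) := by
  intro q q' h
  simp only [Prod.mk.injEq] at h
  exact Prod.ext (List.append_cancel_left h.1) (List.append_cancel_left h.2)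

lemma mapPrepend_apply (p : List ℕ+ × List ℕ+) (g : (List ℕ+ × List ℕ+) →₀ K)
    (a b : List ℕ+) :
    Finsupp.mapDomain (fun q : List ℕ+ × List ℕ+ => (p.1 ++ q.1, p.2 ++ q.2)) g
      (p.1 ++ a, p.2 ++ b) = g (a, b) :=
  Finsupp.mapDomain_apply (prepend_inj p) g (a, b)

lemma mapPrepend_apply' (p : List ℕ+ × List ℕ+) (g : (List ℕ+ × List ℕ+) →₀ K)
    (a b : List ℕ+) (x : List ℕ+ × List ℕ+) (hx : x = (p.1 ++ a, p.2 ++ b)) :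
    Finsupp.mapDomain (fun q : List ℕ+ × List ℕ+ => (p.1 ++ q.1, p.2 ++ q.2)) g x
      = g (a, b) := by
  rw [hx]; exact mapPrepend_apply p g a b

lemma mapPrepend_apply_ne (p : List ℕ+ × List ℕ+) (g : (List ℕ+ × List ℕ+) →₀ K)
    (x : List ℕ+ × List ℕ+) (h : ∀ a b, x ≠ (p.1 ++ a, p.2 ++ b)) :
    Finsupp.mapDomain (fun q : List ℕ+ × List ℕ+ => (p.1 ++ q.1, p.2 ++ q.2)) g x = 0 :=
  Finsupp.mapDomain_notin_range _ _ (by rintro ⟨⟨a, b⟩, hq⟩; exact h a b hq.symm)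

lemma deltaWord_cons_expand (n : ℕ+) (w : List ℕ+) (x : List ℕ+ × List ℕ+) :
    deltaWord K (n :: w) x =
      Finsupp.mapDomain (fun q : List ℕ+ × List ℕ+ => ([n] ++ q.1, [] ++ q.2))
        (deltaWord K w) x +
      Finsupp.mapDomain (fun q : List ℕ+ × List ℕ+ => ([] ++ q.1, [n] ++ q.2))
        (deltaWord K w) x +
      ∑ p ∈ Finset.Iio n,
        Finsupp.mapDomain (fun q : List ℕ+ × List ℕ+ => ([p] ++ q.1, [n - p] ++ q.2))
          (deltaWord K w) x := by
  show mulPair K (deltaLetter K n) (deltaWord K w) x = _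
  unfold deltaLetter
  rw [mulPair_add_left, mulPair_add_left, mulPair_sum_left, mulPair_single_left,
    mulPair_single_left,
    Finset.sum_congr rfl fun p _ => mulPair_single_left (K := K) ([p], [n - p]) (deltaWord K w)]
  simp only [Finsupp.add_apply]
  congr 1
  exact Finset.sum_apply' _

lemma deltaWord_nil_left (w b : List ℕ+) :
    deltaWord K w ([], b) = if b = w then 1 else 0 := by
  induction w generalizing b with
  | nil =>
    show (Finsupp.single (([] : List ℕ+), ([] : List ℕ+)) (1:K)) ([], b) = _
    simp [Finsupp.single_apply, eq_comm]
  | cons n w ih =>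
    rw [deltaWord_cons_expand]
    rw [mapPrepend_apply_ne ([n], []) _ _ (by rintro a b' ⟨⟩)]
    rw [Finset.sum_eq_zero fun p _ => mapPrepend_apply_ne ([p], [n-p]) _ _ (by rintro a b' ⟨⟩)]
    rcases b with _ | ⟨m, b⟩
    · rw [mapPrepend_apply_ne ([], [n]) _ _ (by rintro a b' ⟨⟩)]
      simp
    · rcases eq_or_ne m n with rfl | hm
      · rw [mapPrepend_apply' ([], [m]) _ [] b _ (by simp), ih]
        simp
      · rw [mapPrepend_apply_ne ([], [n]) _ _ (by rintro a b' h; injection h with h1 h2; injection h2 with h3; exact hm h3)]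
        simp [hm]

lemma deltaWord_nil_right (w a : List ℕ+) :
    deltaWord K w (a, []) = if a = w then 1 else 0 := by
  induction w generalizing a with
  | nil =>
    show (Finsupp.single (([] : List ℕ+), ([] : List ℕ+)) (1:K)) (a, []) = _
    simp [Finsupp.single_apply, eq_comm]
  | cons n w ih =>
    rw [deltaWord_cons_expand]
    rw [mapPrepend_apply_ne ([], [n]) _ _ (by rintro a' b' ⟨⟩)]
    rw [Finset.sum_eq_zero fun p _ => mapPrepend_apply_ne ([p], [n-p]) _ _ (by rintro a' b' ⟨⟩)]
    rcases a with _ | ⟨m, a⟩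
    · rw [mapPrepend_apply_ne ([n], []) _ _ (by rintro a' b' ⟨⟩)]
      simp
    · rcases eq_or_ne m n with rfl | hm
      · rw [mapPrepend_apply' ([m], []) _ a [] _ (by simp), ih]
        simp
      · rw [mapPrepend_apply_ne ([n], []) _ _ (by rintro a' b' h; injection h with h1 h2; injection h1 with h3; exact hm h3)]
        simp [hm]

lemma pnat_split (i j n : ℕ+) : (i < n ∧ n - i = j) ↔ i + j = n := by
  constructor
  · rintro ⟨h, rfl⟩; rw [add_comm]; exact PNat.sub_add_of_lt h
  · rintro rfl; exact ⟨PNat.lt_add_right i j, by rw [add_comm]; exact PNat.add_sub⟩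

lemma deltaWord_cons_cons (n : ℕ+) (w : List ℕ+) (i : ℕ+) (u : List ℕ+)
    (j : ℕ+) (v : List ℕ+) :
    deltaWord K (n :: w) (i :: u, j :: v) =
      (if i = n then deltaWord K w (u, j :: v) else 0) +
      (if j = n then deltaWord K w (i :: u, v) else 0) +
      (if i + j = n then deltaWord K w (u, v) else 0) := by
  rw [deltaWord_cons_expand]
  congr 1
  · congr 1
    · rcases eq_or_ne i n with rfl | hi
      · rw [mapPrepend_apply' ([i], []) _ u (j :: v) _ (by simp)]; simp
      · rw [mapPrepend_apply_ne ([n], []) _ _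
          (by rintro a' b' h; injection h with h1 h2; injection h1 with h3; exact hi h3)]
        simp [hi]
    · rcases eq_or_ne j n with rfl | hj
      · rw [mapPrepend_apply' ([], [j]) _ (i :: u) v _ (by simp)]; simp
      · rw [mapPrepend_apply_ne ([], [n]) _ _
          (by rintro a' b' h; injection h with h1 h2; injection h2 with h3; exact hj h3)]
        simp [hj]
  · have key : ∀ p ∈ Finset.Iio n,
        Finsupp.mapDomain (fun q : List ℕ+ × List ℕ+ => ([p] ++ q.1, [n - p] ++ q.2))
          (deltaWord K w) (i :: u, j :: v) =
        if p = i ∧ n - p = j then deltaWord K w (u, v) else 0 := by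
      intro p _
      by_cases hp : p = i ∧ n - p = j
      · obtain ⟨rfl, h2⟩ := hp
        rw [if_pos ⟨rfl, h2⟩]
        exact mapPrepend_apply' ([p], [n - p]) _ u v _ (by simp [h2])
      · rw [if_neg hp]
        refine mapPrepend_apply_ne ([p], [n - p]) _ _ ?_
        rintro a' b' h
        injection h with h1 h2
        injection h1 with h3 h4
        injection h2 with h5 h6
        exact hp ⟨h3.symm, h5.symm⟩
    rw [Finset.sum_congr rfl key]
    by_cases hin : i + j = n
    · rw [if_pos hin]
      obtain ⟨hlt, hsub⟩ := (pnat_split i j n).mpr hin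
      rw [Finset.sum_eq_single i]
      · rw [if_pos ⟨rfl, hsub⟩]
      · intro p _ hp
        rw [if_neg (by rintro ⟨rfl, -⟩; exact hp rfl)]
      · intro h
        exact absurd (Finset.mem_Iio.mpr hlt) h
    · rw [if_neg hin]
      refine Finset.sum_eq_zero fun p hp => ?_
      rw [if_neg]
      rintro ⟨rfl, h2⟩
      exact hin ((pnat_split p j n).mp ⟨Finset.mem_Iio.mp hp, h2⟩)

lemma mapDomain_cons_apply (i : ℕ+) (f : List ℕ+ →₀ K) (n : ℕ+) (w : List ℕ+) :
    Finsupp.mapDomain (i :: ·) f (n :: w) = if i = n then f w else 0 := by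
  rcases eq_or_ne i n with rfl | h
  · rw [if_pos rfl]
    exact Finsupp.mapDomain_apply List.cons_injective f w
  · rw [if_neg h]
    refine Finsupp.mapDomain_notin_range _ _ ?_
    rintro ⟨a, ha⟩
    injection ha with h1 h2
    exact h h1

lemma mapDomain_cons_apply_nil (i : ℕ+) (f : List ℕ+ →₀ K) :
    Finsupp.mapDomain (i :: ·) f [] = 0 := by
  refine Finsupp.mapDomain_notin_range _ _ ?_
  rintro ⟨a, ha⟩
  exact List.cons_ne_nil _ _ ha

end Aux


/-- `Δ_⊛` is dual to the stuffle product: `⟨u ⊛ v, w⟩ = ⟨u ⊗ v, Δ_⊛(w)⟩`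
for all words `u, v, w`, with respect to the pairing making words orthonormal. -/
theorem stuffle_dual_coproduct (K : Type*) [Field K] [CharZero K]
    (u v w : List ℕ+) :
    (stuffleWord K u v) w = (deltaWord K w) (u, v) := by
  have H : ∀ N : ℕ, ∀ u v w : List ℕ+, u.length + v.length ≤ N →
      (stuffleWord K u v) w = (deltaWord K w) (u, v) := by
    intro N
    induction N with
    | zero =>
      intro u v w h
      have hu : u = [] := by cases u <;> simp_all
      have hv : v = [] := by cases u <;> cases v <;> simp_all
      subst hu hv
      rw [stuffleWord, deltaWord_nil_left]
      simp [Finsupp.single_apply, eq_comm]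
    | succ N ih =>
      intro u v w h
      match u, v with
      | [], v =>
        rw [stuffleWord, deltaWord_nil_left]
        simp [Finsupp.single_apply]
      | i :: u, [] =>
        rw [show stuffleWord K (i :: u) [] = Finsupp.single (i :: u) 1 from by
          rw [stuffleWord]; simp, deltaWord_nil_right]
        simp [Finsupp.single_apply]
      | i :: u, j :: v =>
        rw [show stuffleWord K (i :: u) (j :: v) =
          Finsupp.mapDomain (i :: ·) (stuffleWord K u (j :: v)) +
          Finsupp.mapDomain (j :: ·) (stuffleWord K (i :: u) v) +
          Finsupp.mapDomain ((i + j) :: ·) (stuffleWord K u v) from by rw [stuffleWord]]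
        simp only [List.length_cons] at h
        rcases w with _ | ⟨n, w⟩
        · simp only [Finsupp.add_apply, mapDomain_cons_apply_nil, add_zero,
            Finsupp.coe_zero, Pi.zero_apply]
          show (0 : K) = Finsupp.single (([] : List ℕ+), ([] : List ℕ+)) (1:K) (i :: u, j :: v)
          simp [Finsupp.single_apply]
        · simp only [Finsupp.add_apply, mapDomain_cons_apply]
          rw [deltaWord_cons_cons]
          rw [ih u (j :: v) w (by simp only [List.length_cons]; omega),
            ih (i :: u) v w (by simp only [List.length_cons]; omega),
            ih u v w (by omega)]
  exact H (u.length + v.length) u v w le_rfl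
end

section
/- Every nonempty word w over a totally ordered alphabet X admits a unique factorization w = l_1 l_2 ... l_k as a nonincreasing product of Lyndon words (l_1 ≥ l_2 ≥ ... ≥ l_k in the lexicographic order). -/
/-- A Lyndon word over a totally ordered alphabet: a nonempty word that is
strictly smaller (lexicographically) than each of its proper nonempty suffixes. -/
def IsLyndon {X : Type*} [LinearOrder X] (w : List X) : Prop :=
  w ≠ [] ∧ ∀ u v : List X, u ≠ [] → v ≠ [] → w = u ++ v → w < v

namespace LyndonAux

variable {X : Type*} [LinearOrder X]

theorem lt_is_lex {u v : List X} : u < v ↔ List.Lex (· < ·) u v := Iff.rfl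

theorem lex_append {u v : List X} (h : List.Lex (· < ·) u v) (hp : ¬ u <+: v) :
    ∀ x y : List X, List.Lex (· < ·) (u ++ x) (v ++ y) := by
  induction h with
  | nil => exact absurd (List.nil_prefix) hp
  | @cons a u' v' h ih =>
    intro x y
    exact List.Lex.cons (ih (fun hpre => hp (List.cons_prefix_cons.mpr ⟨rfl, hpre⟩)) x y)
  | rel h => intro x y; exact List.Lex.rel h

theorem lt_append {u v : List X} (h : u < v) (hp : ¬ u <+: v) (x y : List X) :
    u ++ x < v ++ y := lex_append h hp x y

theorem append_left_lt {x y : List X} (h : x < y) (u : List X) : u ++ x < u ++ y := by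
  induction u with
  | nil => exact h
  | cons a u ih => exact List.Lex.cons ih

theorem not_append_lt_self (u t : List X) : ¬ (u ++ t < u) := by
  induction u with
  | nil => exact fun h => List.not_lt_nil _ h
  | cons a u ih =>
    intro h
    cases h with
    | cons h => exact ih h
    | rel h => exact lt_irrefl _ h

theorem prefix_le {u v : List X} (h : u <+: v) : u ≤ v := by
  obtain ⟨t, rfl⟩ := h
  exact le_of_not_gt (not_append_lt_self u t)

theorem singleton_lyndon (a : X) : IsLyndon [a] := by
  refine ⟨by simp, fun u v hu hv heq => ?_⟩
  have := congrArg List.length heq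
  simp [List.length_append] at this
  rcases u with _ | ⟨b, u⟩; · exact absurd rfl hu
  rcases v with _ | ⟨c, v⟩; · exact absurd rfl hv
  simp at this
  omega

theorem merge_lyndon {u v : List X} (hu : IsLyndon u) (hv : IsLyndon v) (huv : u < v) :
    IsLyndon (u ++ v) := by
  have hlt_v : u ++ v < v := by
    by_cases hp : u <+: v
    · obtain ⟨t, rfl⟩ := hp
      have ht : t ≠ [] := by
        rintro rfl
        rw [List.append_nil] at huv
        exact lt_irrefl _ huv
      have : u ++ t < t := hv.2 u t hu.1 ht rfl
      exact append_left_lt this u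
    · have := lt_append huv hp v []
      simpa using this
  refine ⟨by simp [hu.1], fun s t hs ht heq => ?_⟩
  rcases List.append_eq_append_iff.mp heq with ⟨a, ha, hva⟩ | ⟨c, hc, htc⟩
  · -- s = u ++ a, v = a ++ t
    rcases eq_or_ne a [] with rfl | hane
    · simp only [List.nil_append] at hva
      subst hva
      exact hlt_v
    · have : v < t := hv.2 a t hane ht hva
      exact lt_trans hlt_v this
  · -- u = s ++ c, t = c ++ v
    rcases eq_or_ne c [] with rfl | hcne
    · simp only [List.nil_append] at htc
      subst htc
      exact hlt_v
    · have huc : u < c := hu.2 s c hs hcne hc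
      have hnp : ¬ u <+: c := by
        intro hpre
        have h1 := hpre.length_le
        have hs' : 0 < s.length := List.length_pos_iff.mpr hs
        have h2 : u.length = s.length + c.length := by
          rw [hc, List.length_append]
        omega
      have := lt_append huc hnp v v
      rw [htc]
      exact this

/-- Decomposition: a nonempty prefix of a flatten ends in a nonempty prefix of
one of the factors. -/
theorem prefix_flatten_decomp :
    ∀ (fs : List (List X)) (p : List X), p ≠ [] → p <+: fs.flatten →
      ∃ u g, g ∈ fs ∧ u <+: g ∧ u ≠ [] ∧ u <:+ p := by
  intro fs
  induction fs with
  | nil =>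
    intro p hp hpre
    simp at hpre
    exact absurd hpre hp
  | cons g fs ih =>
    intro p hp hpre
    simp only [List.flatten_cons] at hpre
    by_cases hlen : p.length ≤ g.length
    · have hpg : p <+: g :=
        List.prefix_of_prefix_length_le hpre (List.prefix_append g fs.flatten) hlen
      exact ⟨p, g, by simp, hpg, hp, List.suffix_refl p⟩
    · push_neg at hlen
      have hgp : g <+: p :=
        List.prefix_of_prefix_length_le (List.prefix_append g fs.flatten) hpre (le_of_lt hlen)
      obtain ⟨p', rfl⟩ := hgp
      have hp' : p' ≠ [] := by
        rintro rfl; simp at hlen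
      have hpre' : p' <+: fs.flatten := (List.prefix_append_right_inj g).mp hpre
      obtain ⟨u, g', hg', hug, hu, hsuf⟩ := ih p' hp' hpre'
      exact ⟨u, g', by simp [hg'], hug, hu, hsuf.trans (List.suffix_append g p')⟩

theorem head_le_of_chain {l : List X} {ls : List (List X)}
    (h : List.Chain' (fun a b => b ≤ a) (l :: ls)) : ∀ g ∈ ls, g ≤ l := by
  haveI : IsTrans (List X) (fun a b : List X => b ≤ a) :=
    ⟨fun _ _ _ h1 h2 => le_trans h2 h1⟩
  have := List.isChain_iff_pairwise.mp h
  exact (List.pairwise_cons.mp this).1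

/-- Key uniqueness lemma: any Lyndon prefix of the word is no longer than the
first factor. -/
theorem lyndon_prefix_length_le {l : List X} {ls : List (List X)}
    (hlyn : ∀ g ∈ l :: ls, IsLyndon g)
    (hch : List.Chain' (fun a b => b ≤ a) (l :: ls))
    {p : List X} (hp : IsLyndon p) (hpre : p <+: (l :: ls).flatten) :
    p.length ≤ l.length := by
  by_contra hlen
  push_neg at hlen
  simp only [List.flatten_cons] at hpre
  have hlp : l <+: p :=
    List.prefix_of_prefix_length_le (List.prefix_append l ls.flatten) hpre (le_of_lt hlen)
  obtain ⟨p', rfl⟩ := hlp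
  have hp' : p' ≠ [] := by rintro rfl; simp at hlen
  have hpre' : p' <+: ls.flatten := (List.prefix_append_right_inj l).mp hpre
  obtain ⟨u, g, hg, hug, hu, hsuf⟩ := prefix_flatten_decomp ls p' hp' hpre'
  obtain ⟨s, rfl⟩ := hsuf
  -- p = l ++ s ++ u, u nonempty suffix of p, l ++ s nonempty
  have h1 : l ++ (s ++ u) < u := by
    refine hp.2 (l ++ s) u ?_ hu (by simp)
    simp [(hlyn l (by simp)).1]
  have h2 : u ≤ g := prefix_le hug
  have h3 : g ≤ l := head_le_of_chain hch g hg
  have h4 : l ≤ l ++ (s ++ u) := prefix_le ⟨s ++ u, rfl⟩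
  exact absurd (lt_of_lt_of_le h1 (h2.trans (h3.trans h4))) (lt_irrefl _)

theorem flatten_ne_nil {ls : List (List X)} (hlyn : ∀ g ∈ ls, IsLyndon g)
    (hne : ls ≠ []) : ls.flatten ≠ [] := by
  rcases ls with _ | ⟨g, ls⟩
  · exact absurd rfl hne
  · simp only [List.flatten_cons, ne_eq, List.append_eq_nil_iff]
    intro ⟨h, _⟩
    exact (hlyn g (by simp)).1 h

theorem uniqueness :
    ∀ (ls ms : List (List X)),
      (∀ g ∈ ls, IsLyndon g) → List.Chain' (fun a b => b ≤ a) ls →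
      (∀ g ∈ ms, IsLyndon g) → List.Chain' (fun a b => b ≤ a) ms →
      ls.flatten = ms.flatten → ls = ms := by
  intro ls
  induction ls with
  | nil =>
    intro ms _ _ hmlyn _ hflat
    rcases ms with _ | ⟨m, ms⟩
    · rfl
    · exact absurd hflat.symm (flatten_ne_nil hmlyn (by simp))
  | cons l ls ih =>
    intro ms hllyn hlch hmlyn hmch hflat
    rcases ms with _ | ⟨m, ms⟩
    · exact absurd hflat (flatten_ne_nil hllyn (by simp))
    · have hl1 : l.length ≤ m.length := by
        refine lyndon_prefix_length_le hmlyn hmch (hllyn l (by simp)) ?_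
        rw [← hflat]; exact List.prefix_append l _
      have hm1 : m.length ≤ l.length := by
        refine lyndon_prefix_length_le hllyn hlch (hmlyn m (by simp)) ?_
        rw [hflat]; exact List.prefix_append m _
      have hlm : l = m := by
        have ha : l <+: (m :: ms).flatten := by
          rw [← hflat, List.flatten_cons]; exact List.prefix_append l _
        have hb : m <+: (m :: ms).flatten := by
          rw [List.flatten_cons]; exact List.prefix_append m _
        have hpre : l <+: m := List.prefix_of_prefix_length_le ha hb hl1
        exact hpre.eq_of_length (le_antisymm hl1 hm1)
      subst hlm
      have hflat' : ls.flatten = ms.flatten := by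
        simpa using hflat
      have := ih ms (fun g hg => hllyn g (by simp [hg])) hlch.tail
        (fun g hg => hmlyn g (by simp [hg])) hmch.tail hflat'
      rw [this]

theorem not_chain'_decomp {α : Type*} {r : α → α → Prop} :
    ∀ (l : List α), ¬ List.Chain' r l →
      ∃ t1 a b t2, l = t1 ++ a :: b :: t2 ∧ ¬ r a b := by
  intro l
  induction l with
  | nil => intro h; exact absurd List.isChain_nil h
  | cons a l ih =>
    intro h
    rcases l with _ | ⟨b, l⟩
    · exact absurd (List.isChain_singleton a) h
    · simp only [List.Chain', List.isChain_cons_cons] at h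
      by_cases hab : r a b
      · have : ¬ List.Chain' r (b :: l) := fun hc => h ⟨hab, hc⟩
        obtain ⟨t1, x, y, t2, heq, hr⟩ := ih this
        exact ⟨a :: t1, x, y, t2, by rw [heq]; rfl, hr⟩
      · exact ⟨[], a, b, l, rfl, hab⟩

theorem existence_aux :
    ∀ (n : ℕ) (fs : List (List X)), fs.length = n → (∀ g ∈ fs, IsLyndon g) →
      ∃ ls, (∀ g ∈ ls, IsLyndon g) ∧ List.Chain' (fun a b => b ≤ a) ls ∧
        ls.flatten = fs.flatten := by
  intro n
  induction n using Nat.strong_induction_on with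
  | _ n ih =>
    intro fs hlen hlyn
    by_cases hch : List.Chain' (fun a b : List X => b ≤ a) fs
    · exact ⟨fs, hlyn, hch, rfl⟩
    · obtain ⟨t1, a, b, t2, heq, hab⟩ := not_chain'_decomp fs hch
      push_neg at hab
      have hab' : a < b := hab
      have halyn : IsLyndon a := hlyn a (by simp [heq])
      have hblyn : IsLyndon b := hlyn b (by simp [heq])
      have hmerge := merge_lyndon halyn hblyn hab'
      set fs' := t1 ++ (a ++ b) :: t2 with hfs'
      have hlen' : fs'.length < n := by
        subst hlen
        simp [hfs', heq, List.length_append]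
      have hlyn' : ∀ g ∈ fs', IsLyndon g := by
        intro g hg
        simp only [hfs', List.mem_append, List.mem_cons] at hg
        rcases hg with hg | rfl | hg
        · exact hlyn g (by simp [heq, hg])
        · exact hmerge
        · exact hlyn g (by simp [heq, hg])
      obtain ⟨ls, h1, h2, h3⟩ := ih fs'.length hlen' fs' rfl hlyn'
      refine ⟨ls, h1, h2, ?_⟩
      rw [h3, hfs', heq]
      simp [List.flatten_append]

end LyndonAux

/-- Every nonempty word admits a unique factorization as a nonincreasing
product of Lyndon words. -/
theorem unique_decreasing_lyndon_factorization {X : Type*} [LinearOrder X]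
    (w : List X) (hw : w ≠ []) :
    ∃! ls : List (List X),
      (∀ l ∈ ls, IsLyndon l) ∧
      List.Chain' (fun a b => b ≤ a) ls ∧
      ls.flatten = w := by
  obtain ⟨ls, h1, h2, h3⟩ := LyndonAux.existence_aux (w.map (fun a => [a])).length
      (w.map (fun a => [a])) rfl (by
        intro g hg
        simp only [List.mem_map] at hg
        obtain ⟨a, _, rfl⟩ := hg
        exact LyndonAux.singleton_lyndon a)
  have hflat : (w.map (fun a => [a])).flatten = w := by
    clear hw h3
    induction w with
    | nil => rfl
    | cons a w ihw => simp [ihw]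
  refine ⟨ls, ⟨h1, h2, by rw [h3, hflat]⟩, ?_⟩
  rintro ms ⟨hm1, hm2, hm3⟩
  exact LyndonAux.uniqueness ms ls hm1 hm2 h1 h2 (by rw [hm3, h3, hflat])
end

section
/- Let g be a Lie algebra over a field k of characteristic 0 with ordered basis B = (b_i)_{i∈I}, let (B^α)_{α∈ℕ^{(I)}} be the associated PBW basis of the universal enveloping algebra U(g) (decreasing-ordered monomials in the b_i), and let (S_α) be the dual family of linear forms with ⟨S_α, B^β⟩ = δ_{αβ}. Then under the convolution product * on U(g)^* (dual to the standard coproduct Δ(x) = x⊗1 + 1⊗x for x ∈ g), one has S_α * S_β = ((α+β)!/(α!β!)) S_{α+β} for all α, β ∈ ℕ^{(I)}. -/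
open TensorProduct

/-- The PBW monomial `B^α`: the product `b_{i₁}^{α(i₁)} ⋯ b_{i_k}^{α(i_k)}`
taken in decreasing order of indices, inside the universal enveloping algebra. -/
noncomputable def pbwMonomial {k : Type*} [Field k] {I : Type*} [LinearOrder I]
    {g : Type*} [LieRing g] [LieAlgebra k g] (B : Module.Basis I k g) (α : I →₀ ℕ) :
    UniversalEnvelopingAlgebra k g :=
  (((α.support.sort (· ≤ ·)).reverse).map
    (fun i => (UniversalEnvelopingAlgebra.ι k (B i) :
      UniversalEnvelopingAlgebra k g) ^ (α i))).prod

/-- Convolution of two linear forms on `U(g)`, dual to the coproduct `Δ`. -/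
noncomputable def convForm {k : Type*} [Field k] {g : Type*} [LieRing g]
    [LieAlgebra k g]
    (Δ : UniversalEnvelopingAlgebra k g →ₐ[k]
      (UniversalEnvelopingAlgebra k g ⊗[k] UniversalEnvelopingAlgebra k g))
    (f h : UniversalEnvelopingAlgebra k g →ₗ[k] k) :
    UniversalEnvelopingAlgebra k g →ₗ[k] k :=
  (TensorProduct.lid k k).toLinearMap ∘ₗ TensorProduct.map f h ∘ₗ Δ.toLinearMap

/-- `α! = Π_i α(i)!` for a multiindex `α`. -/
def mfact {I : Type*} (α : I →₀ ℕ) : ℕ := α.prod fun _ n => n.factorial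

namespace DualPBW

variable {k : Type*} [Field k] {I : Type*} [LinearOrder I]
  {g : Type*} [LieRing g] [LieAlgebra k g] (B : Module.Basis I k g)

noncomputable def lp (L : List I) (γ : I →₀ ℕ) : UniversalEnvelopingAlgebra k g :=
  (L.map fun i => (UniversalEnvelopingAlgebra.ι k (B i) :
      UniversalEnvelopingAlgebra k g) ^ (γ i)).prod

lemma lp_nil (γ : I →₀ ℕ) : lp B ([] : List I) γ = 1 := rfl

lemma lp_cons (i : I) (L : List I) (γ : I →₀ ℕ) :
    lp B (i :: L) γ =
      (UniversalEnvelopingAlgebra.ι k (B i) : UniversalEnvelopingAlgebra k g) ^ (γ i)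
        * lp B L γ := by
  simp [lp]

lemma pbw_eq_lp (γ : I →₀ ℕ) :
    pbwMonomial B γ = lp B ((γ.support.sort (· ≤ ·)).reverse) γ := rfl

lemma lp_congr {L : List I} {γ δ : I →₀ ℕ} (h : ∀ j ∈ L, γ j = δ j) :
    lp B L γ = lp B L δ := by
  induction L with
  | nil => rfl
  | cons i L ih =>
      rw [lp_cons, lp_cons, h i List.mem_cons_self,
        ih fun j hj => h j (List.mem_cons_of_mem _ hj)]

lemma lp_filter (L : List I) (δ : I →₀ ℕ) :
    lp B L δ = lp B (L.filter fun j => decide (j ∈ δ.support)) δ := by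
  induction L with
  | nil => rfl
  | cons i L ih =>
      by_cases hi : i ∈ δ.support
      · rw [List.filter_cons_of_pos (by simpa using hi), lp_cons, lp_cons, ih]
      · rw [List.filter_cons_of_neg (by simpa using hi), lp_cons, ih]
        have : δ i = 0 := by simpa [Finsupp.mem_support_iff] using hi
        simp [this]

lemma lp_sorted (s : Finset I) (δ : I →₀ ℕ) (h : δ.support ⊆ s) :
    lp B ((s.sort (· ≤ ·)).reverse) δ = pbwMonomial B δ := by
  rw [pbw_eq_lp, lp_filter B ((s.sort (· ≤ ·)).reverse) δ]
  congr 1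
  rw [List.filter_reverse, List.reverse_inj]
  have hperm : List.Perm (List.filter (fun j => decide (j ∈ δ.support))
      (Finset.sort s (fun x1 x2 => x1 ≤ x2)))
      (Finset.sort δ.support (fun x1 x2 => x1 ≤ x2)) := by
    apply List.perm_of_nodup_nodup_toFinset_eq
    · exact (Finset.sort_nodup _ _).filter _
    · exact Finset.sort_nodup _ _
    · ext j
      simp only [List.toFinset_filter, List.mem_toFinset, Finset.mem_filter,
        Finset.sort_toFinset, decide_eq_true_eq]
      constructor
      · rintro ⟨_, hj⟩
        simpa [Finset.mem_sort] using hj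
      · intro hj
        exact ⟨h (by simpa using hj), by simpa using hj⟩
  exact List.Perm.eq_of_pairwise' ((Finset.pairwise_sort _ _).filter _)
    (Finset.pairwise_sort _ _) hperm


lemma delta_pow (Δ : UniversalEnvelopingAlgebra k g →ₐ[k]
      (UniversalEnvelopingAlgebra k g ⊗[k] UniversalEnvelopingAlgebra k g))
    (hΔ : ∀ x : g, Δ (UniversalEnvelopingAlgebra.ι k x) =
      (UniversalEnvelopingAlgebra.ι k x : UniversalEnvelopingAlgebra k g) ⊗ₜ[k] 1 +
        1 ⊗ₜ[k] (UniversalEnvelopingAlgebra.ι k x : UniversalEnvelopingAlgebra k g))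
    (x : g) (n : ℕ) :
    Δ ((UniversalEnvelopingAlgebra.ι k x : UniversalEnvelopingAlgebra k g) ^ n) =
      ∑ m ∈ Finset.range (n + 1), (n.choose m : k) •
        (((UniversalEnvelopingAlgebra.ι k x : UniversalEnvelopingAlgebra k g) ^ m) ⊗ₜ[k]
          ((UniversalEnvelopingAlgebra.ι k x : UniversalEnvelopingAlgebra k g) ^ (n - m))) := by
  set y : UniversalEnvelopingAlgebra k g := UniversalEnvelopingAlgebra.ι k x
  have hc : Commute ((y : UniversalEnvelopingAlgebra k g) ⊗ₜ[k] (1 : UniversalEnvelopingAlgebra k g))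
      ((1 : UniversalEnvelopingAlgebra k g) ⊗ₜ[k] y) := by
    simp [Commute, SemiconjBy, Algebra.TensorProduct.tmul_mul_tmul]
  rw [map_pow, hΔ, hc.add_pow]
  refine Finset.sum_congr rfl fun m hm => ?_
  rw [Algebra.TensorProduct.tmul_pow, Algebra.TensorProduct.tmul_pow,
    Algebra.TensorProduct.tmul_mul_tmul, one_pow, one_pow, mul_one, one_mul,
    ← nsmul_eq_mul', Nat.cast_smul_eq_nsmul k]

def cf (γ δ : I →₀ ℕ) : ℕ := γ.prod fun i n => n.choose (δ i)

lemma cf_single_add (i : I) (n m : ℕ) (γ' δ : I →₀ ℕ) (hi : γ' i = 0)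
    (hδ : ∀ j, δ j ≤ γ' j) (hm : m ≤ n) :
    cf (Finsupp.single i n + γ') (Finsupp.single i m + δ) = n.choose m * cf γ' δ := by
  have hδi : δ i = 0 := Nat.le_zero.mp (hi ▸ hδ i)
  rcases Nat.eq_zero_or_pos n with hn | hn
  · subst hn
    interval_cases m
    simp [cf]
  · have hdis : Disjoint (Finsupp.single i n).support γ'.support := by
      rw [Finsupp.support_single_ne_zero i hn.ne']
      simp [Finset.disjoint_singleton_left, Finsupp.mem_support_iff, hi]
    have hsupp : (Finsupp.single i n + γ').support =
        insert i γ'.support := by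
      rw [Finsupp.support_add_eq hdis, Finsupp.support_single_ne_zero i hn.ne']
      rfl
    have hins : i ∉ γ'.support := by simp [Finsupp.mem_support_iff, hi]
    rw [cf, Finsupp.prod, hsupp, Finset.prod_insert hins]
    congr 1
    · simp [Finsupp.single_apply, hi, hδi]
    · rw [cf, Finsupp.prod]
      refine Finset.prod_congr rfl fun j hj => ?_
      have hji : j ≠ i := fun h => hins (h ▸ hj)
      simp [Finsupp.single_apply, hji.symm]

lemma cf_mfact (γ δ ε : I →₀ ℕ) (h : δ + ε = γ) :
    cf γ δ * (mfact δ * mfact ε) = mfact γ := by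
  have hle : ∀ j, δ j ≤ γ j := fun j => by
    rw [← h]; exact Nat.le_add_right _ _
  have hle' : ∀ j, ε j ≤ γ j := fun j => by
    rw [← h]; exact Nat.le_add_left _ _
  have hδ : δ.support ⊆ γ.support := fun j hj => by
    simp only [Finsupp.mem_support_iff] at hj ⊢
    exact fun hc => hj (Nat.le_zero.mp (hc ▸ hle j))
  have hε : ε.support ⊆ γ.support := fun j hj => by
    simp only [Finsupp.mem_support_iff] at hj ⊢
    exact fun hc => hj (Nat.le_zero.mp (hc ▸ hle' j))
  rw [mfact, mfact, mfact,
    Finsupp.prod_of_support_subset δ hδ _ (fun _ _ => rfl),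
    Finsupp.prod_of_support_subset ε hε _ (fun _ _ => rfl), cf, Finsupp.prod,
    Finsupp.prod, ← Finset.prod_mul_distrib, ← Finset.prod_mul_distrib]
  refine Finset.prod_congr rfl fun j _ => ?_
  have hj : γ j = δ j + ε j := by rw [← h]; rfl
  rw [hj, ← Nat.add_choose_mul_factorial_mul_factorial (δ j) (ε j), mul_assoc,
    Nat.add_comm (δ j) (ε j), Nat.choose_symm_of_eq_add rfl]


lemma delta_lp (Δ : UniversalEnvelopingAlgebra k g →ₐ[k]
      (UniversalEnvelopingAlgebra k g ⊗[k] UniversalEnvelopingAlgebra k g))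
    (hΔ : ∀ x : g, Δ (UniversalEnvelopingAlgebra.ι k x) =
      (UniversalEnvelopingAlgebra.ι k x : UniversalEnvelopingAlgebra k g) ⊗ₜ[k] 1 +
        1 ⊗ₜ[k] (UniversalEnvelopingAlgebra.ι k x : UniversalEnvelopingAlgebra k g))
    (L : List I) (hN : L.Nodup) (γ : I →₀ ℕ) (hs : ∀ j ∈ γ.support, j ∈ L) :
    Δ (lp B L γ) = ∑ p ∈ Finset.HasAntidiagonal.antidiagonal γ,
      (cf γ p.1 : k) • (lp B L p.1 ⊗ₜ[k] lp B L p.2) := by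
  induction L generalizing γ with
  | nil =>
      have hγ : γ = 0 := by
        ext j
        by_contra hj
        exact absurd (hs j (Finsupp.mem_support_iff.mpr fun h => hj (by simp [h])))
          List.not_mem_nil
      subst hγ
      simp [lp_nil, Finsupp.antidiagonal_zero, cf, Algebra.TensorProduct.one_def]
  | cons i L' ih =>
      have hiL' : i ∉ L' := (List.nodup_cons.mp hN).1
      have hN' : L'.Nodup := (List.nodup_cons.mp hN).2
      set n := γ i with hn
      set γ' := γ.erase i with hγ'
      have hγ'i : γ' i = 0 := Finsupp.erase_same
      have hdec : Finsupp.single i n + γ' = γ := Finsupp.single_add_erase i γ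
      have hs' : ∀ j ∈ γ'.support, j ∈ L' := by
        intro j hj
        have hji : j ≠ i := by
          intro h; rw [h] at hj
          exact (Finsupp.mem_support_iff.mp hj) hγ'i
        have := hs j (by
          rw [hγ', Finsupp.support_erase] at hj
          exact Finset.mem_of_mem_erase hj)
        rcases List.mem_cons.mp this with h | h
        · exact absurd h hji
        · exact h
      have hcongr : lp B L' γ = lp B L' γ' := by
        apply lp_congr
        intro j hj
        have hji : j ≠ i := fun h => hiL' (h ▸ hj)
        rw [hγ', Finsupp.erase_ne hji]
      rw [lp_cons, map_mul, hcongr, delta_pow Δ hΔ, ih hN' γ' hs',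
        Finset.sum_mul_sum]
      rw [← Finset.sum_product']
      refine Finset.sum_bij'
        (fun q _ => (Finsupp.single i q.1 + q.2.1, Finsupp.single i (n - q.1) + q.2.2))
        (fun q _ => (q.1 i, (q.1.erase i, q.2.erase i))) ?_ ?_ ?_ ?_ ?_
      · rintro ⟨m, p⟩ hq
        simp only [Finset.mem_product, Finset.mem_range, Finset.HasAntidiagonal.mem_antidiagonal] at hq
        obtain ⟨hm, hp⟩ := hq
        rw [Finset.HasAntidiagonal.mem_antidiagonal]
        have : Finsupp.single i m + Finsupp.single i (n - m) = Finsupp.single i n := by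
          rw [← Finsupp.single_add]
          congr 1
          omega
        calc Finsupp.single i m + p.1 + (Finsupp.single i (n - m) + p.2)
            = Finsupp.single i m + Finsupp.single i (n - m) + (p.1 + p.2) := by
              abel
          _ = Finsupp.single i n + γ' := by rw [this, hp]
          _ = γ := hdec
      · rintro ⟨q1, q2⟩ hq
        rw [Finset.HasAntidiagonal.mem_antidiagonal] at hq
        simp only [Finset.mem_product, Finset.mem_range, Finset.HasAntidiagonal.mem_antidiagonal]
        constructor
        · have : q1 i + q2 i = n := by simp only [hn, ← hq]; rfl
          omega
        · rw [hγ', ← hq, Finsupp.erase_add]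
      · rintro ⟨m, p⟩ hq
        simp only [Finset.mem_product, Finset.mem_range, Finset.HasAntidiagonal.mem_antidiagonal] at hq
        obtain ⟨hm, hp⟩ := hq
        have hp1 : p.1 i = 0 := by
          have : p.1 i ≤ γ' i := by rw [← hp]; exact Nat.le_add_right _ _
          omega
        have hp2 : p.2 i = 0 := by
          have : p.2 i ≤ γ' i := by rw [← hp]; exact Nat.le_add_left _ _
          omega
        have e1 : (Finsupp.single i m + p.1) i = m := by
          simp [Finsupp.single_apply, hp1]
        have e2 : (Finsupp.single i m + p.1).erase i = p.1 := by
          rw [Finsupp.erase_add, Finsupp.erase_single]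
          rw [zero_add]
          ext j
          rcases eq_or_ne j i with rfl | hj
          · rw [Finsupp.erase_same, hp1]
          · rw [Finsupp.erase_ne hj]
        have e3 : (Finsupp.single i (n - m) + p.2).erase i = p.2 := by
          rw [Finsupp.erase_add, Finsupp.erase_single, zero_add]
          ext j
          rcases eq_or_ne j i with rfl | hj
          · rw [Finsupp.erase_same, hp2]
          · rw [Finsupp.erase_ne hj]
        simp only [e1, e2, e3]
      · rintro ⟨q1, q2⟩ hq
        rw [Finset.HasAntidiagonal.mem_antidiagonal] at hq
        have hsum : q1 i + q2 i = n := by simp only [hn, ← hq]; rfl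
        have : n - q1 i = q2 i := by omega
        simp only [this, Finsupp.single_add_erase]
      · rintro ⟨m, p⟩ hq
        simp only [Finset.mem_product, Finset.mem_range, Finset.HasAntidiagonal.mem_antidiagonal] at hq
        obtain ⟨hm, hp⟩ := hq
        have hm' : m ≤ n := by omega
        have hp1 : p.1 i = 0 := by
          have : p.1 i ≤ γ' i := by rw [← hp]; exact Nat.le_add_right _ _
          omega
        have hp2 : p.2 i = 0 := by
          have : p.2 i ≤ γ' i := by rw [← hp]; exact Nat.le_add_left _ _
          omega
        have hδle : ∀ j, p.1 j ≤ γ' j := fun j => by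
          rw [← hp]; exact Nat.le_add_right _ _
        have hcf : cf γ (Finsupp.single i m + p.1) = n.choose m * cf γ' p.1 := by
          rw [← hdec]
          exact cf_single_add i n m γ' p.1 hγ'i hδle hm'
        have hl1 : lp B (i :: L') (Finsupp.single i m + p.1) =
            (UniversalEnvelopingAlgebra.ι k (B i) : UniversalEnvelopingAlgebra k g) ^ m
              * lp B L' p.1 := by
          rw [lp_cons]
          congr 1
          · congr 1
            simp [Finsupp.single_apply, hp1]
          · apply lp_congr
            intro j hj
            have hji : j ≠ i := fun h => hiL' (h ▸ hj)
            simp [Finsupp.single_apply, hji.symm, if_neg]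
        have hl2 : lp B (i :: L') (Finsupp.single i (n - m) + p.2) =
            (UniversalEnvelopingAlgebra.ι k (B i) : UniversalEnvelopingAlgebra k g) ^ (n - m)
              * lp B L' p.2 := by
          rw [lp_cons]
          congr 1
          · congr 1
            simp [Finsupp.single_apply, hp2]
          · apply lp_congr
            intro j hj
            have hji : j ≠ i := fun h => hiL' (h ▸ hj)
            simp [Finsupp.single_apply, hji.symm, if_neg]
        rw [hl1, hl2, hcf, smul_mul_smul_comm, Algebra.TensorProduct.tmul_mul_tmul,
          Nat.cast_mul]


lemma mfact_pos {I : Type*} (δ : I →₀ ℕ) : 0 < mfact δ :=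
  Finset.prod_pos fun _ _ => Nat.factorial_pos _

end DualPBW

open DualPBW

/-- For a Lie algebra `g` with ordered basis `B`, PBW basis `(B^α)` of `U(g)` and
dual family `S_α = C.coord α`, convolution (dual to `Δ(x) = x⊗1 + 1⊗x` for `x ∈ g`)
satisfies `S_α * S_β = ((α+β)!/(α!β!)) S_{α+β}`. -/
theorem dual_pbw_convolution {k : Type*} [Field k] [CharZero k]
    {I : Type*} [LinearOrder I] {g : Type*} [LieRing g] [LieAlgebra k g]
    (B : Module.Basis I k g)
    (C : Module.Basis (I →₀ ℕ) k (UniversalEnvelopingAlgebra k g))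
    (hC : ∀ α, C α = pbwMonomial B α)
    (Δ : UniversalEnvelopingAlgebra k g →ₐ[k]
      (UniversalEnvelopingAlgebra k g ⊗[k] UniversalEnvelopingAlgebra k g))
    (hΔ : ∀ x : g, Δ (UniversalEnvelopingAlgebra.ι k x) =
      (UniversalEnvelopingAlgebra.ι k x : UniversalEnvelopingAlgebra k g) ⊗ₜ[k] 1 +
        1 ⊗ₜ[k] (UniversalEnvelopingAlgebra.ι k x : UniversalEnvelopingAlgebra k g))
    (α β : I →₀ ℕ) :
    convForm Δ (C.coord α) (C.coord β) =
      ((mfact (α + β) : k) / ((mfact α : k) * (mfact β : k))) • C.coord (α + β) := by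
  classical
  apply Module.Basis.ext C
  intro γ
  set L : List I := (γ.support.sort (· ≤ ·)).reverse with hL
  have hN : L.Nodup := by
    rw [hL, List.nodup_reverse]
    exact Finset.sort_nodup _ _
  have hsupp : ∀ j ∈ γ.support, j ∈ L := fun j hj => by
    rw [hL, List.mem_reverse, Finset.mem_sort]
    exact hj
  have hCγ : C γ = lp B L γ := by rw [hC, pbw_eq_lp]
  have hev : ∀ δ : I →₀ ℕ, δ.support ⊆ γ.support → ∀ μ : I →₀ ℕ,
      C.coord μ (lp B L δ) = if δ = μ then 1 else 0 := by
    intro δ hδ μ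
    rw [hL, lp_sorted B γ.support δ hδ, ← hC, Module.Basis.coord_apply, Module.Basis.repr_self,
      Finsupp.single_apply]
  have hsub : ∀ p ∈ Finset.HasAntidiagonal.antidiagonal γ, p.1.support ⊆ γ.support ∧
      p.2.support ⊆ γ.support := by
    intro p hp
    rw [Finset.HasAntidiagonal.mem_antidiagonal] at hp
    constructor <;> intro j hj <;>
      simp only [Finsupp.mem_support_iff] at hj ⊢ <;> intro hc
    · have : p.1 j ≤ γ j := by rw [← hp]; exact Nat.le_add_right _ _
      omega
    · have : p.2 j ≤ γ j := by rw [← hp]; exact Nat.le_add_left _ _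
      omega
  have hLHS : convForm Δ (C.coord α) (C.coord β) (C γ) =
      ∑ p ∈ Finset.HasAntidiagonal.antidiagonal γ, (cf γ p.1 : k) *
        ((if p.1 = α then (1:k) else 0) * (if p.2 = β then (1:k) else 0)) := by
    rw [convForm, LinearMap.comp_apply, LinearMap.comp_apply, AlgHom.toLinearMap_apply,
      hCγ, delta_lp B Δ hΔ L hN γ hsupp, map_sum, map_sum]
    refine Finset.sum_congr rfl fun p hp => ?_
    rw [LinearMapClass.map_smul, LinearMapClass.map_smul, TensorProduct.map_tmul,
      LinearEquiv.coe_toLinearMap, TensorProduct.lid_tmul,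
      hev p.1 (hsub p hp).1 α, hev p.2 (hsub p hp).2 β]
    simp [smul_eq_mul]
  have hRHS : (((mfact (α + β) : k) / ((mfact α : k) * (mfact β : k))) •
      C.coord (α + β)) (C γ) =
      ((mfact (α + β) : k) / ((mfact α : k) * (mfact β : k))) *
        (if γ = α + β then (1:k) else 0) := by
    rw [LinearMap.smul_apply, Module.Basis.coord_apply, Module.Basis.repr_self, Finsupp.single_apply,
      smul_eq_mul]
  rw [hLHS, hRHS]
  by_cases hγ : α + β = γ
  · rw [if_pos hγ.symm, mul_one]
    rw [Finset.sum_eq_single (α, β)]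
    · rw [if_pos rfl, if_pos rfl, mul_one, mul_one]
      have hfact := cf_mfact γ α β hγ
      have hne : (mfact α : k) * (mfact β : k) ≠ 0 :=
        mul_ne_zero (Nat.cast_ne_zero.mpr (mfact_pos α).ne')
          (Nat.cast_ne_zero.mpr (mfact_pos β).ne')
      rw [eq_div_iff hne, hγ]
      exact_mod_cast hfact
    · rintro ⟨p1, p2⟩ hp hne
      rcases eq_or_ne p1 α with rfl | h1
      · have h2 : p2 ≠ β := fun h => hne (by rw [h])
        rw [if_neg h2, mul_zero, mul_zero]
      · rw [if_neg h1, zero_mul, mul_zero]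
    · intro hmem
      exact absurd (Finset.HasAntidiagonal.mem_antidiagonal.mpr hγ) hmem
  · rw [if_neg (fun h => hγ h.symm), mul_zero]
    refine Finset.sum_eq_zero fun p hp => ?_
    rw [Finset.HasAntidiagonal.mem_antidiagonal] at hp
    rcases eq_or_ne p.1 α with h1 | h1
    · rcases eq_or_ne p.2 β with h2 | h2
      · exact absurd (by rw [← h1, ← h2, hp]) hγ
      · rw [if_neg h2, mul_zero, mul_zero]
    · rw [if_neg h1, zero_mul, mul_zero]
end

section
/- With the notation of the previous statement, the rescaled family T_α = α! · S_α is multiplicative for convolution: T_α * T_β = T_{α+β} for all α, β ∈ ℕ^{(I)}. -/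
open TensorProduct

set_option linter.unusedSectionVars false

/-- The coefficient `∏_l (γ l).choose (δ l)` (product over the support of `γ`). -/
def cf {I : Type*} (γ δ : I →₀ ℕ) : ℕ := γ.prod fun l m => m.choose (δ l)

lemma cf_step {I : Type*} [DecidableEq I] (i : I) (γ p1 : I →₀ ℕ) (hp : p1 i = 0)
    {j : ℕ} (hj : j ≤ γ i) :
    cf γ (Finsupp.single i j + p1) = (γ i).choose j * cf (γ.erase i) p1 := by
  have hiES : i ∉ (γ.erase i).support := by simp [Finsupp.support_erase]
  have hsup : γ.support ⊆ insert i (γ.erase i).support := by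
    intro l hl
    rcases eq_or_ne l i with rfl | hne
    · exact Finset.mem_insert_self _ _
    · refine Finset.mem_insert_of_mem ?_
      rw [Finsupp.support_erase, Finset.mem_erase]
      exact ⟨hne, hl⟩
  have hext : cf γ (Finsupp.single i j + p1)
      = ∏ l ∈ insert i (γ.erase i).support, (γ l).choose ((Finsupp.single i j + p1) l) := by
    rw [cf, Finsupp.prod]
    refine Finset.prod_subset hsup ?_
    intro l hl hnl
    have hγl : γ l = 0 := by
      by_contra h
      exact hnl (Finsupp.mem_support_iff.mpr h)
    rcases Finset.mem_insert.mp hl with rfl | hmem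
    · have hj0 : j = 0 := by omega
      simp [hγl, hj0, hp]
    · exfalso
      rw [Finsupp.support_erase, Finset.mem_erase, Finsupp.mem_support_iff] at hmem
      exact hmem.2 hγl
  rw [hext, Finset.prod_insert hiES]
  congr 1
  · congr 1
    simp [hp]
  · rw [cf, Finsupp.prod]
    refine Finset.prod_congr rfl fun l hl => ?_
    have hli : l ≠ i := by
      rw [Finsupp.support_erase, Finset.mem_erase] at hl
      exact hl.1
    rw [Finsupp.erase_ne hli, Finsupp.add_apply, Finsupp.single_eq_of_ne' (Ne.symm hli), zero_add]

lemma cf_mul_fact {I : Type*} (α β : I →₀ ℕ) :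
    cf (α + β) α * (mfact α * mfact β) = mfact (α + β) := by
  classical
  have hα : α.support ⊆ (α + β).support := by
    intro l hl
    rw [Finsupp.mem_support_iff] at hl ⊢
    rw [Finsupp.add_apply]
    omega
  have hβ : β.support ⊆ (α + β).support := by
    intro l hl
    rw [Finsupp.mem_support_iff] at hl ⊢
    rw [Finsupp.add_apply]
    omega
  have h1 : mfact α = ∏ l ∈ (α + β).support, (α l).factorial := by
    rw [mfact, Finsupp.prod]
    refine Finset.prod_subset hα fun l _ hnl => ?_
    rw [Finsupp.notMem_support_iff.mp hnl]
    rfl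
  have h2 : mfact β = ∏ l ∈ (α + β).support, (β l).factorial := by
    rw [mfact, Finsupp.prod]
    refine Finset.prod_subset hβ fun l _ hnl => ?_
    rw [Finsupp.notMem_support_iff.mp hnl]
    rfl
  rw [h1, h2, cf, Finsupp.prod, mfact, Finsupp.prod, ← Finset.prod_mul_distrib,
    ← Finset.prod_mul_distrib]
  refine Finset.prod_congr rfl fun l _ => ?_
  rw [Finsupp.add_apply]
  have := Nat.choose_mul_factorial_mul_factorial (Nat.le_add_right (α l) (β l))
  rw [Nat.add_sub_cancel_left] at this
  rw [← this]
  ring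

section Aux

variable {k : Type*} [Field k] {I : Type*} [LinearOrder I]
  {g : Type*} [LieRing g] [LieAlgebra k g] (B : Module.Basis I k g)

/-- Ordered product of powers along a list of indices. -/
noncomputable def Pl (L : List I) (δ : I →₀ ℕ) : UniversalEnvelopingAlgebra k g :=
  (L.map (fun i => (UniversalEnvelopingAlgebra.ι k (B i) :
      UniversalEnvelopingAlgebra k g) ^ (δ i))).prod

lemma Pl_nil (δ : I →₀ ℕ) : Pl B [] δ = 1 := rfl

lemma Pl_cons (i : I) (L : List I) (δ : I →₀ ℕ) :
    Pl B (i :: L) δ =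
      (UniversalEnvelopingAlgebra.ι k (B i) : UniversalEnvelopingAlgebra k g) ^ (δ i)
        * Pl B L δ := by
  simp [Pl]

lemma Pl_congr {L : List I} {δ δ' : I →₀ ℕ} (h : ∀ i ∈ L, δ i = δ' i) :
    Pl B L δ = Pl B L δ' := by
  unfold Pl
  congr 1
  exact List.map_congr_left fun i hi => by rw [h i hi]

lemma Pl_filter (L : List I) (δ : I →₀ ℕ) :
    Pl B L δ = Pl B (L.filter fun i => δ i ≠ 0) δ := by
  induction L with
  | nil => rfl
  | cons i L ih =>
    by_cases h : δ i = 0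
    · simp [Pl_cons, List.filter_cons, h, ih]
    · simp [Pl_cons, List.filter_cons, h, ih]

lemma Pl_eq_pbw {L : List I} (hL : L.Pairwise (· > ·)) {δ : I →₀ ℕ}
    (hδ : ∀ i, δ i ≠ 0 → i ∈ L) : Pl B L δ = pbwMonomial B δ := by
  rw [Pl_filter]
  have hL' : (L.filter fun i => δ i ≠ 0).Pairwise (· > ·) := hL.filter _
  have hs : ((δ.support.sort (· ≤ ·)).reverse).Pairwise (· > ·) := by
    rw [List.pairwise_reverse]
    exact δ.support.sortedLT_sort.pairwise
  have heq : (L.filter fun i => δ i ≠ 0) = (δ.support.sort (· ≤ ·)).reverse := by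
    apply List.Perm.eq_of_pairwise (fun a b _ _ h1 h2 => absurd (lt_trans h1 h2) (lt_irrefl _)) hL' hs
    rw [List.perm_ext_iff_of_nodup hL'.nodup hs.nodup]
    intro x
    simp only [List.mem_filter, List.mem_reverse, Finset.mem_sort,
      Finsupp.mem_support_iff, decide_not, Bool.not_eq_true', decide_eq_false_iff_not,
      ne_eq]
    constructor
    · rintro ⟨-, h⟩; exact h
    · intro h; exact ⟨hδ x h, h⟩
  rw [heq]; rfl

variable (Δ : UniversalEnvelopingAlgebra k g →ₐ[k]
      (UniversalEnvelopingAlgebra k g ⊗[k] UniversalEnvelopingAlgebra k g))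

lemma delta_pow
    (hΔ : ∀ x : g, Δ (UniversalEnvelopingAlgebra.ι k x) =
      (UniversalEnvelopingAlgebra.ι k x : UniversalEnvelopingAlgebra k g) ⊗ₜ[k] 1 +
        1 ⊗ₜ[k] (UniversalEnvelopingAlgebra.ι k x : UniversalEnvelopingAlgebra k g))
    (x : g) (n : ℕ) :
    Δ ((UniversalEnvelopingAlgebra.ι k x : UniversalEnvelopingAlgebra k g) ^ n)
      = ∑ j ∈ Finset.range (n + 1), (n.choose j) •
        (((UniversalEnvelopingAlgebra.ι k x : UniversalEnvelopingAlgebra k g) ^ j) ⊗ₜ[k]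
          ((UniversalEnvelopingAlgebra.ι k x : UniversalEnvelopingAlgebra k g) ^ (n - j))) := by
  rw [map_pow, hΔ]
  have hc : Commute
      ((UniversalEnvelopingAlgebra.ι k x : UniversalEnvelopingAlgebra k g) ⊗ₜ[k]
        (1 : UniversalEnvelopingAlgebra k g))
      ((1 : UniversalEnvelopingAlgebra k g) ⊗ₜ[k]
        (UniversalEnvelopingAlgebra.ι k x : UniversalEnvelopingAlgebra k g)) := by
    unfold Commute SemiconjBy
    simp [Algebra.TensorProduct.tmul_mul_tmul]
  rw [hc.add_pow]
  refine Finset.sum_congr rfl fun j hj => ?_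
  rw [Algebra.TensorProduct.tmul_pow, Algebra.TensorProduct.tmul_pow, one_pow, one_pow,
    Algebra.TensorProduct.tmul_mul_tmul, mul_one, one_mul, nsmul_eq_mul,
    (Nat.cast_commute (n.choose j) _).eq]

lemma delta_Pl
    (hΔ : ∀ x : g, Δ (UniversalEnvelopingAlgebra.ι k x) =
      (UniversalEnvelopingAlgebra.ι k x : UniversalEnvelopingAlgebra k g) ⊗ₜ[k] 1 +
        1 ⊗ₜ[k] (UniversalEnvelopingAlgebra.ι k x : UniversalEnvelopingAlgebra k g)) :
    ∀ (L : List I), L.Nodup → ∀ (γ : I →₀ ℕ), (∀ i, γ i ≠ 0 → i ∈ L) →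
      Δ (Pl B L γ) = ∑ p ∈ Finset.HasAntidiagonal.antidiagonal γ,
        cf γ p.1 • (Pl B L p.1 ⊗ₜ[k] Pl B L p.2) := by
  intro L
  induction L with
  | nil =>
    intro _ γ hγ
    have hγ0 : γ = 0 := by
      ext l
      by_contra h
      exact (List.not_mem_nil) (hγ l h)
    subst hγ0
    rw [Pl_nil, map_one]
    simp [cf, Pl_nil, Algebra.TensorProduct.one_def]
  | cons i L ih =>
    intro hnd γ hγ
    rw [List.nodup_cons] at hnd
    obtain ⟨hiL, hndL⟩ := hnd
    classical
    set x : UniversalEnvelopingAlgebra k g := (UniversalEnvelopingAlgebra.ι k (B i) :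
      UniversalEnvelopingAlgebra k g) with hx
    set n := γ i with hn
    set γ' := γ.erase i with hγ'def
    have hγ'i : γ' i = 0 := Finsupp.erase_same
    have hγdec : Finsupp.single i n + γ' = γ := Finsupp.single_add_erase i γ
    have hsupp' : ∀ l, γ' l ≠ 0 → l ∈ L := by
      intro l hl
      rcases eq_or_ne l i with rfl | hne
      · exact absurd hγ'i hl
      · have hl' : γ l ≠ 0 := by rwa [hγ'def, Finsupp.erase_ne hne] at hl
        rcases List.mem_cons.mp (hγ l hl') with rfl | h
        · exact absurd rfl hne
        · exact h
    have h1 : Pl B (i :: L) γ = x ^ n * Pl B L γ' := by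
      rw [Pl_cons]
      congr 1
      exact Pl_congr B fun l hl =>
        (Finsupp.erase_ne (fun h : l = i => hiL (h ▸ hl))).symm
    rw [h1, map_mul, delta_pow Δ hΔ, ih hndL γ' hsupp', Finset.sum_mul_sum,
      ← Finset.sum_product']
    refine Finset.sum_nbij'
      (i := fun r => (Finsupp.single i r.1 + r.2.1, Finsupp.single i (n - r.1) + r.2.2))
      (j := fun q => (q.1 i, (q.1.erase i, q.2.erase i))) ?_ ?_ ?_ ?_ ?_
    · rintro ⟨j, p1, p2⟩ hr
      rw [Finset.mem_product, Finset.mem_range, Finset.HasAntidiagonal.mem_antidiagonal] at hr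
      obtain ⟨hjr, hpr⟩ := hr
      rw [Finset.HasAntidiagonal.mem_antidiagonal]
      have hre : (Finsupp.single i j + p1) + (Finsupp.single i (n - j) + p2)
          = (Finsupp.single i j + Finsupp.single i (n - j)) + (p1 + p2) := by
        abel
      rw [hre, ← Finsupp.single_add, hpr]
      have hjn : j + (n - j) = n := by omega
      rw [hjn, hγdec]
    · rintro ⟨q1, q2⟩ hq
      rw [Finset.HasAntidiagonal.mem_antidiagonal] at hq
      rw [Finset.mem_product, Finset.mem_range, Finset.HasAntidiagonal.mem_antidiagonal]
      have hqi : q1 i + q2 i = n := by rw [← Finsupp.add_apply, hq]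
      dsimp only
      constructor
      · omega
      · rw [hγ'def, ← hq, Finsupp.erase_add]
    · rintro ⟨j, p1, p2⟩ hr
      rw [Finset.mem_product, Finset.mem_range, Finset.HasAntidiagonal.mem_antidiagonal] at hr
      obtain ⟨hjr, hpr⟩ := hr
      have h0 : p1 i + p2 i = 0 := by rw [← Finsupp.add_apply, hpr, hγ'i]
      have hp1i : p1 i = 0 := by omega
      have hp2i : p2 i = 0 := by omega
      simp only [Prod.mk.injEq]
      refine ⟨?_, ?_, ?_⟩
      · rw [Finsupp.add_apply, Finsupp.single_eq_same, hp1i, add_zero]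
      · ext l
        rcases eq_or_ne l i with rfl | hne
        · rw [Finsupp.erase_same, hp1i]
        · rw [Finsupp.erase_ne hne, Finsupp.add_apply,
            Finsupp.single_eq_of_ne' (Ne.symm hne), zero_add]
      · ext l
        rcases eq_or_ne l i with rfl | hne
        · rw [Finsupp.erase_same, hp2i]
        · rw [Finsupp.erase_ne hne, Finsupp.add_apply,
            Finsupp.single_eq_of_ne' (Ne.symm hne), zero_add]
    · rintro ⟨q1, q2⟩ hq
      rw [Finset.HasAntidiagonal.mem_antidiagonal] at hq
      have hqi : q1 i + q2 i = n := by rw [← Finsupp.add_apply, hq]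
      simp only [Prod.mk.injEq]
      constructor
      · exact Finsupp.single_add_erase i q1
      · have hnj : n - q1 i = q2 i := by omega
        rw [hnj]
        exact Finsupp.single_add_erase i q2
    · rintro ⟨j, p1, p2⟩ hr
      rw [Finset.mem_product, Finset.mem_range, Finset.HasAntidiagonal.mem_antidiagonal] at hr
      obtain ⟨hjr, hpr⟩ := hr
      have h0 : p1 i + p2 i = 0 := by rw [← Finsupp.add_apply, hpr, hγ'i]
      have hp1i : p1 i = 0 := by omega
      have hjn : j ≤ γ i := by rw [← hn]; omega
      have hc : cf γ (Finsupp.single i j + p1) = n.choose j * cf γ' p1 := by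
        rw [cf_step i γ p1 hp1i hjn, ← hn, hγ'def]
      have hPl1 : Pl B (i :: L) (Finsupp.single i j + p1) = x ^ j * Pl B L p1 := by
        rw [Pl_cons]
        have he : (Finsupp.single i j + p1) i = j := by
          rw [Finsupp.add_apply, Finsupp.single_eq_same, hp1i, add_zero]
        rw [he]
        congr 1
        exact Pl_congr B fun l hl => by
          rw [Finsupp.add_apply,
            Finsupp.single_eq_of_ne' (fun h : i = l => hiL (h ▸ hl)), zero_add]
      have hPl2 : Pl B (i :: L) (Finsupp.single i (n - j) + p2) = x ^ (n - j) * Pl B L p2 := by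
        rw [Pl_cons]
        have hp2i : p2 i = 0 := by omega
        have he : (Finsupp.single i (n - j) + p2) i = n - j := by
          rw [Finsupp.add_apply, Finsupp.single_eq_same, hp2i, add_zero]
        rw [he]
        congr 1
        exact Pl_congr B fun l hl => by
          rw [Finsupp.add_apply,
            Finsupp.single_eq_of_ne' (fun h : i = l => hiL (h ▸ hl)), zero_add]
      rw [smul_mul_assoc, mul_smul_comm, smul_smul, Algebra.TensorProduct.tmul_mul_tmul,
        hc, hPl1, hPl2]

end Aux

/-- The rescaled dual family `T_α = α! · S_α` of a PBW basis is multiplicative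
for convolution: `T_α * T_β = T_{α+β}`. -/
theorem rescaled_dual_pbw_multiplicative {k : Type*} [Field k] [CharZero k]
    {I : Type*} [LinearOrder I] {g : Type*} [LieRing g] [LieAlgebra k g]
    (B : Module.Basis I k g)
    (C : Module.Basis (I →₀ ℕ) k (UniversalEnvelopingAlgebra k g))
    (hC : ∀ α, C α = pbwMonomial B α)
    (Δ : UniversalEnvelopingAlgebra k g →ₐ[k]
      (UniversalEnvelopingAlgebra k g ⊗[k] UniversalEnvelopingAlgebra k g))
    (hΔ : ∀ x : g, Δ (UniversalEnvelopingAlgebra.ι k x) =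
      (UniversalEnvelopingAlgebra.ι k x : UniversalEnvelopingAlgebra k g) ⊗ₜ[k] 1 +
        1 ⊗ₜ[k] (UniversalEnvelopingAlgebra.ι k x : UniversalEnvelopingAlgebra k g))
    (T : (I →₀ ℕ) → (UniversalEnvelopingAlgebra k g →ₗ[k] k))
    (hT : ∀ α, T α = (mfact α : k) • C.coord α)
    (α β : I →₀ ℕ) :
    convForm Δ (T α) (T β) = T (α + β) := by
  classical
  apply C.ext
  intro γ
  set L : List I := (γ.support.sort (· ≤ ·)).reverse with hL
  have hLs : L.Pairwise (· > ·) := by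
    rw [hL, List.pairwise_reverse]
    exact γ.support.sortedLT_sort.pairwise
  have hLmem : ∀ l, γ l ≠ 0 → l ∈ L := by
    intro l hl
    rw [hL, List.mem_reverse, Finset.mem_sort]
    exact Finsupp.mem_support_iff.mpr hl
  have hCγ : C γ = Pl B L γ := by
    rw [hC]
    exact (Pl_eq_pbw B hLs hLmem).symm
  have hTval : ∀ δ ε : I →₀ ℕ, T δ (C ε) = if ε = δ then (mfact δ : k) else 0 := by
    intro δ ε
    rw [hT]
    simp only [LinearMap.smul_apply, Module.Basis.coord_apply, Module.Basis.repr_self, smul_eq_mul]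
    rw [Finsupp.single_apply]
    split <;> simp
  have key : convForm Δ (T α) (T β) (C γ)
      = ∑ p ∈ Finset.HasAntidiagonal.antidiagonal γ,
          cf γ p.1 • (T α (Pl B L p.1) * T β (Pl B L p.2)) := by
    simp only [convForm, LinearMap.coe_comp, Function.comp_apply, AlgHom.toLinearMap_apply,
      LinearEquiv.coe_coe]
    rw [hCγ, delta_Pl B Δ hΔ L hLs.nodup γ hLmem, map_sum, map_sum]
    refine Finset.sum_congr rfl fun p hp => ?_
    rw [map_nsmul, map_nsmul, TensorProduct.map_tmul, TensorProduct.lid_tmul, smul_eq_mul]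
  rw [key]
  have hPlC : ∀ p ∈ Finset.HasAntidiagonal.antidiagonal γ, Pl B L p.1 = C p.1 ∧ Pl B L p.2 = C p.2 := by
    intro p hp
    rw [Finset.HasAntidiagonal.mem_antidiagonal] at hp
    constructor
    · refine Pl_eq_pbw B hLs (fun l hl => hLmem l ?_) |>.trans (hC p.1).symm
      have : p.1 l + p.2 l = γ l := by rw [← Finsupp.add_apply, hp]
      omega
    · refine Pl_eq_pbw B hLs (fun l hl => hLmem l ?_) |>.trans (hC p.2).symm
      have : p.1 l + p.2 l = γ l := by rw [← Finsupp.add_apply, hp]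
      omega
  have key2 : ∑ p ∈ Finset.HasAntidiagonal.antidiagonal γ,
        cf γ p.1 • (T α (Pl B L p.1) * T β (Pl B L p.2))
      = ∑ p ∈ Finset.HasAntidiagonal.antidiagonal γ,
          cf γ p.1 • ((if p.1 = α then (mfact α : k) else 0) *
            (if p.2 = β then (mfact β : k) else 0)) := by
    refine Finset.sum_congr rfl fun p hp => ?_
    rw [(hPlC p hp).1, (hPlC p hp).2, hTval, hTval]
  rw [key2]
  by_cases hγab : γ = α + β
  · subst hγab
    have hmem : (α, β) ∈ Finset.HasAntidiagonal.antidiagonal (α + β) := by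
      rw [Finset.HasAntidiagonal.mem_antidiagonal]
    rw [Finset.sum_eq_single_of_mem (α, β) hmem]
    · rw [if_pos rfl, if_pos rfl, hTval, if_pos rfl, nsmul_eq_mul]
      exact_mod_cast cf_mul_fact α β
    · rintro ⟨p1, p2⟩ hp hne
      rcases eq_or_ne p1 α with rfl | h1
      · have h2 : p2 ≠ β := fun h => hne (by rw [h])
        rw [if_neg h2, mul_zero, smul_zero]
      · rw [if_neg h1, zero_mul, smul_zero]
  · rw [hTval, if_neg (fun h => hγab h)]
    refine Finset.sum_eq_zero fun p hp => ?_
    rw [Finset.HasAntidiagonal.mem_antidiagonal] at hp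
    rcases eq_or_ne p.1 α with h1 | h1
    · have h2 : p.2 ≠ β := by
        intro h2
        exact hγab (by rw [← hp, h1, h2])
      rw [if_neg h2, mul_zero, smul_zero]
    · rw [if_neg h1, zero_mul, smul_zero]
end

section
/- In the commutative polynomial bialgebra, the commutative specialization of Schützenberger's factorization holds: Π_{x∈X} exp(x ⊗ x) = Σ_{α∈ℕ^{(X)}} X^α ⊗ X^α, where the left tensor factor is multiplied with the divided-power (shuffle) product satisfying x^m ⧢ x^n = C(m+n,m) x^{m+n}, and the right tensor factor with the ordinary commutative product. -/
/-- The completed tensor product of the divided-power (shuffle) algebra on the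
variables `X` with the polynomial algebra `k[X]`, realized as double series
indexed by pairs of multiindices.  The product uses the divided-power product
`x^m ⧢ x^n = C(m+n, m) x^{m+n}` on the left factor and the ordinary commutative
product on the right factor. -/
noncomputable def mulC (K : Type*) [Field K] {X : Type*} [DecidableEq X]
    (f g : (X →₀ ℕ) × (X →₀ ℕ) → K) : (X →₀ ℕ) × (X →₀ ℕ) → K :=
  fun p =>
    ∑ q ∈ Finset.HasAntidiagonal.antidiagonal p.1, ∑ r ∈ Finset.HasAntidiagonal.antidiagonal p.2,
      f (q.1, r.1) * g (q.2, r.2) *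
        ∏ x ∈ p.1.support, ((p.1 x).choose (q.1 x) : K)

/-- The unit double series `1 ⊗ 1`. -/
noncomputable def unitC (K : Type*) [Field K] {X : Type*} [DecidableEq X] :
    (X →₀ ℕ) × (X →₀ ℕ) → K :=
  fun p => if p.1 = 0 ∧ p.2 = 0 then 1 else 0

/-- The separated tensor `x ⊗ x` for a variable `x`. -/
noncomputable def xTensorX (K : Type*) [Field K] {X : Type*} [DecidableEq X]
    (x : X) : (X →₀ ℕ) × (X →₀ ℕ) → K :=
  fun p => if p.1 = Finsupp.single x 1 ∧ p.2 = Finsupp.single x 1 then 1 else 0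

/-- Powers in the completed tensor product. -/
noncomputable def powC (K : Type*) [Field K] {X : Type*} [DecidableEq X]
    (t : (X →₀ ℕ) × (X →₀ ℕ) → K) : ℕ → ((X →₀ ℕ) × (X →₀ ℕ) → K)
  | 0 => unitC K
  | n + 1 => mulC K t (powC K t n)

/-- The exponential `exp(t) = Σ_n t^n/n!` in the completed tensor product
(each coefficient is a finite sum, all higher terms vanishing in the relevant
degree). -/
noncomputable def expC (K : Type*) [Field K] {X : Type*} [DecidableEq X]
    (t : (X →₀ ℕ) × (X →₀ ℕ) → K) : (X →₀ ℕ) × (X →₀ ℕ) → K :=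
  fun p => ((List.range (p.1.sum (fun _ n => n) + p.2.sum (fun _ n => n) + 1)).map
    fun n => ((n.factorial : K))⁻¹ * powC K t n p).sum

section Aux
variable (K : Type*) [Field K] {X : Type*} [DecidableEq X]

lemma mulC_eq_zero (f g : (X →₀ ℕ) × (X →₀ ℕ) → K) (α β : X →₀ ℕ)
    (h : ∀ q ∈ Finset.HasAntidiagonal.antidiagonal α, ∀ r ∈ Finset.HasAntidiagonal.antidiagonal β,
      f (q.1, r.1) * g (q.2, r.2) = 0) :
    mulC K f g (α, β) = 0 := by
  unfold mulC
  refine Finset.sum_eq_zero fun q hq => Finset.sum_eq_zero fun r hr => ?_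
  rw [h q hq r hr, zero_mul]

lemma mulC_eq_single (f g : (X →₀ ℕ) × (X →₀ ℕ) → K) (α β : X →₀ ℕ)
    (q₀ r₀ : (X →₀ ℕ) × (X →₀ ℕ))
    (hq₀ : q₀ ∈ Finset.HasAntidiagonal.antidiagonal α) (hr₀ : r₀ ∈ Finset.HasAntidiagonal.antidiagonal β)
    (h : ∀ q ∈ Finset.HasAntidiagonal.antidiagonal α, ∀ r ∈ Finset.HasAntidiagonal.antidiagonal β,
      (q, r) ≠ (q₀, r₀) → f (q.1, r.1) * g (q.2, r.2) = 0) :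
    mulC K f g (α, β) =
      f (q₀.1, r₀.1) * g (q₀.2, r₀.2) *
        ∏ x ∈ α.support, ((α x).choose (q₀.1 x) : K) := by
  unfold mulC
  rw [Finset.sum_eq_single q₀]
  · rw [Finset.sum_eq_single r₀]
    · intro r hr hne
      rw [h q₀ hq₀ r hr (by simp [hne]), zero_mul]
    · intro h'; exact absurd hr₀ h'
  · intro q hq hne
    refine Finset.sum_eq_zero fun r hr => ?_
    rw [h q hq r hr (by simp [hne]), zero_mul]
  · intro h'; exact absurd hq₀ h'

lemma powC_x (x : X) (n : ℕ) (α β : X →₀ ℕ) :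
    powC K (xTensorX K x) n (α, β) =
      if α = Finsupp.single x n ∧ β = Finsupp.single x n then (n.factorial : K) else 0 := by
  induction n generalizing α β with
  | zero => simp [powC, unitC, Finsupp.single_zero]
  | succ n ih =>
    show mulC K (xTensorX K x) (powC K (xTensorX K x) n) (α, β) = _
    by_cases h : α = Finsupp.single x (n + 1) ∧ β = Finsupp.single x (n + 1)
    · obtain ⟨hα, hβ⟩ := h
      subst hα hβ
      have hmem : ((Finsupp.single x 1, Finsupp.single x n) :
          (X →₀ ℕ) × (X →₀ ℕ)) ∈ Finset.HasAntidiagonal.antidiagonal (Finsupp.single x (n + 1)) := by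
        rw [Finset.HasAntidiagonal.mem_antidiagonal, ← Finsupp.single_add]
        congr 1; omega
      rw [mulC_eq_single K _ _ _ _ _ _ hmem hmem ?_]
      · have h1 : xTensorX K x (Finsupp.single x 1, Finsupp.single x 1) = 1 := by
          simp [xTensorX]
        have h2 : powC K (xTensorX K x) n (Finsupp.single x n, Finsupp.single x n) =
            (n.factorial : K) := by rw [ih]; simp
        rw [h1, h2, Finsupp.support_single_ne_zero _ (Nat.succ_ne_zero n)]
        simp only [Finset.prod_singleton, Finsupp.single_eq_same]
        rw [Nat.choose_one_right, if_pos ⟨trivial, trivial⟩]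
        push_cast [Nat.factorial_succ]
        ring
      · rintro q hq r hr hne
        rw [xTensorX, ih]
        by_cases h1 : q.1 = Finsupp.single x 1 ∧ r.1 = Finsupp.single x 1
        · by_cases h2 : q.2 = Finsupp.single x n ∧ r.2 = Finsupp.single x n
          · exfalso
            apply hne
            rw [Finset.HasAntidiagonal.mem_antidiagonal] at hq hr
            have : q = (Finsupp.single x 1, Finsupp.single x n) :=
              Prod.ext h1.1 h2.1
            have : r = (Finsupp.single x 1, Finsupp.single x n) :=
              Prod.ext h1.2 h2.2
            simp_all
          · rw [if_neg h2, mul_zero]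
        · rw [if_neg h1, zero_mul]
    · rw [if_neg h]
      refine mulC_eq_zero K _ _ _ _ fun q hq r hr => ?_
      rw [xTensorX, ih]
      by_cases h1 : q.1 = Finsupp.single x 1 ∧ r.1 = Finsupp.single x 1
      · by_cases h2 : q.2 = Finsupp.single x n ∧ r.2 = Finsupp.single x n
        · exfalso
          apply h
          rw [Finset.HasAntidiagonal.mem_antidiagonal] at hq hr
          rw [← hq, ← hr, h1.1, h1.2, h2.1, h2.2, ← Finsupp.single_add]
          constructor <;> (congr 1; omega)
        · rw [if_neg h2, mul_zero]
      · rw [if_neg h1, zero_mul]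
end Aux

section Aux2
variable (K : Type*) [Field K] [CharZero K] {X : Type*} [DecidableEq X]

lemma expC_x (x : X) (α β : X →₀ ℕ) :
    expC K (xTensorX K x) (α, β) =
      if α = Finsupp.single x (α x) ∧ β = α then 1 else 0 := by
  have hsum : expC K (xTensorX K x) (α, β) =
      ∑ n ∈ Finset.range (α.sum (fun _ n => n) + β.sum (fun _ n => n) + 1),
        ((n.factorial : K))⁻¹ * powC K (xTensorX K x) n (α, β) := rfl
  rw [hsum]
  by_cases h : α = Finsupp.single x (α x) ∧ β = α
  · rw [if_pos h]
    obtain ⟨hα, hβ⟩ := h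
    rw [Finset.sum_eq_single (α x)]
    · rw [powC_x, if_pos ⟨hα, hβ.trans hα⟩]
      exact inv_mul_cancel₀ (Nat.cast_ne_zero.mpr (Nat.factorial_ne_zero _))
    · intro n _ hne
      rw [powC_x, if_neg, mul_zero]
      rintro ⟨h1, -⟩
      apply hne
      have := congrArg (fun f : X →₀ ℕ => f x) h1
      simpa using this.symm
    · intro h'
      exfalso
      apply h'
      rw [Finset.mem_range]
      have : α.sum (fun _ n => n) = α x := by
        conv_lhs => rw [hα]
        exact Finsupp.sum_single_index rfl
      omega
  · rw [if_neg h]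
    refine Finset.sum_eq_zero fun n _ => ?_
    rw [powC_x, if_neg, mul_zero]
    rintro ⟨h1, h2⟩
    refine h ⟨?_, h2.trans h1.symm⟩
    have hx : α x = n := by rw [h1]; simp
    rw [hx]; exact h1

end Aux2

section Aux3
variable (K : Type*) [Field K] [CharZero K] {X : Type*} [DecidableEq X]

lemma foldr_x : ∀ (l : List X), l.Nodup → ∀ α β : X →₀ ℕ,
    ((l.map fun x => expC K (xTensorX K x)).foldr (mulC K) (unitC K)) (α, β) =
      if α = β ∧ ∀ y ∈ α.support, y ∈ l then 1 else 0 := by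
  intro l
  induction l with
  | nil =>
    intro _ α β
    simp only [List.map_nil, List.foldr_nil]
    show (if α = 0 ∧ β = 0 then (1 : K) else 0) = _
    by_cases h : α = β ∧ ∀ y ∈ α.support, y ∈ ([] : List X)
    · obtain ⟨h1, h2⟩ := h
      have hα : α = 0 := Finsupp.support_eq_empty.mp
        (Finset.eq_empty_of_forall_notMem fun y hy => by simpa using h2 y hy)
      rw [if_pos ⟨hα, h1.symm.trans hα⟩, if_pos ⟨h1, fun y hy => by simpa using h2 y hy⟩]
    · rw [if_neg h, if_neg]
      rintro ⟨hα, hβ⟩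
      exact h ⟨hα.trans hβ.symm, fun y hy => by rw [hα] at hy; simp at hy⟩
  | cons x l ih =>
    intro hl α β
    obtain ⟨hx, hl'⟩ := List.nodup_cons.mp hl
    simp only [List.map_cons, List.foldr_cons]
    set g := (l.map fun x => expC K (xTensorX K x)).foldr (mulC K) (unitC K) with hgdef
    have hg : ∀ γ δ : X →₀ ℕ, g (γ, δ) =
        if γ = δ ∧ ∀ y ∈ γ.support, y ∈ l then 1 else 0 := ih hl'
    by_cases h : α = β ∧ ∀ y ∈ α.support, y ∈ x :: l
    · rw [if_pos h]
      obtain ⟨hαβ, hsupp⟩ := h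
      subst hαβ
      set a := Finsupp.single x (α x) with ha
      have hle : a ≤ α := Finsupp.single_le_iff.mpr le_rfl
      have hmem : ((a, α - a) : (X →₀ ℕ) × (X →₀ ℕ)) ∈ Finset.HasAntidiagonal.antidiagonal α := by
        rw [Finset.HasAntidiagonal.mem_antidiagonal]; exact add_tsub_cancel_of_le hle
      rw [mulC_eq_single K _ _ _ _ (a, α - a) (a, α - a) hmem hmem ?_]
      · have h1 : expC K (xTensorX K x) (a, a) = 1 := by
          rw [expC_x, if_pos ⟨by simp [ha], rfl⟩]
        have h2 : g (α - a, α - a) = 1 := by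
          have hsup : ∀ y ∈ (α - a).support, y ∈ l := by
            intro y hy
            rw [Finsupp.mem_support_iff, Finsupp.tsub_apply] at hy
            by_cases hyx : y = x
            · subst hyx; rw [ha, Finsupp.single_eq_same] at hy; omega
            · have hαy : α y ≠ 0 := by intro h0; rw [h0] at hy; simp at hy
              have := hsupp y (Finsupp.mem_support_iff.mpr hαy)
              rcases List.mem_cons.mp this with h' | h'
              · exact absurd h' hyx
              · exact h'
          rw [hg, if_pos ⟨rfl, hsup⟩]
        rw [h1, h2, one_mul, one_mul]
        refine Finset.prod_eq_one fun y _ => ?_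
        by_cases hyx : y = x
        · subst hyx; rw [ha, Finsupp.single_eq_same, Nat.choose_self, Nat.cast_one]
        · rw [ha, Finsupp.single_eq_of_ne' (fun he => hyx he.symm),
            Nat.choose_zero_right, Nat.cast_one]
      · rintro q hq r hr hne
        rw [expC_x, hg]
        by_cases h1 : q.1 = Finsupp.single x (q.1 x) ∧ r.1 = q.1
        · by_cases h2 : q.2 = r.2 ∧ ∀ y ∈ q.2.support, y ∈ l
          · exfalso
            apply hne
            rw [Finset.HasAntidiagonal.mem_antidiagonal] at hq hr
            have hq2x : q.2 x = 0 := by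
              by_contra h0
              exact hx (h2.2 x (Finsupp.mem_support_iff.mpr h0))
            have hq1x : q.1 x = α x := by
              have := congrArg (fun f : X →₀ ℕ => f x) hq
              simpa [hq2x] using this
            have hq1 : q.1 = a := by rw [ha, ← hq1x]; exact h1.1
            have hq2 : q.2 = α - a := by
              rw [← hq, hq1, add_tsub_cancel_left]
            have hr1 : r.1 = a := h1.2.trans hq1
            have hr2 : r.2 = α - a := h2.1 ▸ hq2
            exact Prod.ext (Prod.ext hq1 hq2) (Prod.ext hr1 hr2)
          · rw [if_neg h2, mul_zero]
        · rw [if_neg h1, zero_mul]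
    · rw [if_neg h]
      refine mulC_eq_zero K _ _ _ _ fun q hq r hr => ?_
      rw [expC_x, hg]
      by_cases h1 : q.1 = Finsupp.single x (q.1 x) ∧ r.1 = q.1
      · by_cases h2 : q.2 = r.2 ∧ ∀ y ∈ q.2.support, y ∈ l
        · exfalso
          apply h
          rw [Finset.HasAntidiagonal.mem_antidiagonal] at hq hr
          constructor
          · rw [← hq, ← hr, h1.2, h2.1]
          · intro y hy
            rw [List.mem_cons]
            by_cases hyx : y = x
            · exact Or.inl hyx
            · right
              rw [Finsupp.mem_support_iff, ← hq, Finsupp.add_apply] at hy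
              have hq1y : q.1 y = 0 := by
                rw [h1.1]; exact Finsupp.single_eq_of_ne' (fun he => hyx he.symm)
              have : q.2 y ≠ 0 := by omega
              exact h2.2 y (Finsupp.mem_support_iff.mpr this)
        · rw [if_neg h2, mul_zero]
      · rw [if_neg h1, zero_mul]

end Aux3

/-- The commutative specialization of Schützenberger's factorization:
`Π_{x ∈ X} exp(x ⊗ x) = Σ_{α ∈ ℕ^{(X)}} X^α ⊗ X^α`, stated coefficientwise as
convergence of the net of finite partial products to the diagonal series. -/
theorem schutzenberger_commutative (K : Type*) [Field K] [CharZero K]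
    {X : Type*} [DecidableEq X] (α β : X →₀ ℕ) :
    ∃ F : Finset X, ∀ F' : Finset X, F ⊆ F' →
      ((F'.toList.map fun x => expC K (xTensorX K x)).foldr (mulC K) (unitC K))
          (α, β) = if α = β then 1 else 0 := by
  refine ⟨α.support ∪ β.support, fun F' hF => ?_⟩
  rw [foldr_x K F'.toList F'.nodup_toList α β]
  by_cases h : α = β
  · have hsup : ∀ y ∈ α.support, y ∈ F'.toList := fun y hy =>
      Finset.mem_toList.mpr (hF (Finset.mem_union_left _ hy))
    rw [if_pos h, if_pos ⟨h, hsup⟩]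
  · rw [if_neg h, if_neg (fun hc => h hc.1)]
end
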